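/- Nonblocking coordinator theorem: let L₁ ⊆ E₁*, L₂ ⊆ E₂* be languages, E₁∩E₂ ⊆ E₀ ⊆ E₁∪E₂, and let P₀ : (E₁∪E₂)* → E₀* be an L_i-observer for i = 1,2. Let L₀ = P₀(L₁) ∥ P₀(L₂). Then \overline{L₁ ∥ L₂ ∥ L₀} = \overline{L₁} ∥ \overline{L₂} ∥ \overline{L₀}, i.e., the composed system with coordinator L₀ is nonblocking. -/

import Mathlib

open scoped Classical

/-- Natural projection: erase letters not in `A`. -/
noncomputable def proj {Ev : Type*} (A : Set Ev) (w : List Ev) : List Ev :=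
  w.filter (fun a => decide (a ∈ A))

/-- Projection of a language. -/
noncomputable def projL {Ev : Type*} (A : Set Ev) (L : Set (List Ev)) : Set (List Ev) :=
  proj A '' L

/-- Words over an alphabet `A`, i.e., `A*`. -/
def star {Ev : Type*} (A : Set Ev) : Set (List Ev) := {w | ∀ a ∈ w, a ∈ A}

/-- Synchronous product of `L₁ ⊆ A*` and `L₂ ⊆ B*`. -/
noncomputable def sync {Ev : Type*} (A B : Set Ev) (L1 L2 : Set (List Ev)) :
    Set (List Ev) :=
  {w | w ∈ star (A ∪ B) ∧ proj A w ∈ L1 ∧ proj B w ∈ L2}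

/-- Prefix closure of a language. -/
def prefixCl {Ev : Type*} (L : Set (List Ev)) : Set (List Ev) := {w | ∃ v, w ++ v ∈ L}

/-- Controllability of `K` with respect to (prefix-closed) `L` and uncontrollable events `Eu`. -/
def controllable {Ev : Type*} (K L : Set (List Ev)) (Eu : Set Ev) : Prop :=
  ∀ s ∈ prefixCl K, ∀ u ∈ Eu, s ++ [u] ∈ L → s ++ [u] ∈ prefixCl K

/-- Supremal controllable sublanguage of `K` w.r.t. `N` and `U`. -/
noncomputable def supC {Ev : Type*} (K N : Set (List Ev)) (U : Set Ev) : Set (List Ev) :=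
  ⋃₀ {M | M ⊆ K ∧ controllable M N U}

/-- `proj A` is an `L`-observer. -/
def observer {Ev : Type*} (A : Set Ev) (L : Set (List Ev)) : Prop :=
  ∀ t ∈ projL A L, ∀ s ∈ prefixCl L, proj A s <+: t →
    ∃ u, s ++ u ∈ L ∧ proj A (s ++ u) = t

/-- `proj A` is locally control consistent (LCC) for `L` (w.r.t. uncontrollable events `Eu`). -/
def lcc {Ev : Type*} (A Eu : Set Ev) (L : Set (List Ev)) : Prop :=
  ∀ s ∈ L, ∀ σ ∈ A ∩ Eu, proj A s ++ [σ] ∈ projL A L →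
    (∃ u, (∀ a ∈ u, a ∉ A) ∧ s ++ u ++ [σ] ∈ L) →
    ∃ u, (∀ a ∈ u, a ∈ Eu ∧ a ∉ A) ∧ s ++ u ++ [σ] ∈ L

section H
variable {Ev : Type*}

lemma proj_append (A : Set Ev) (s t : List Ev) : proj A (s ++ t) = proj A s ++ proj A t :=
  List.filter_append s t

lemma proj_proj (A B : Set Ev) (w : List Ev) : proj A (proj B w) = proj (A ∩ B) w := by
  simp only [proj, List.filter_filter]
  apply List.filter_congr
  intro x _
  simp [Set.mem_inter_iff]

lemma proj_set_congr {A B : Set Ev} (h : A = B) (w : List Ev) : proj A w = proj B w := by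
  rw [h]

lemma proj_proj_of_subset {A B : Set Ev} (h : A ⊆ B) (w : List Ev) :
    proj A (proj B w) = proj A w := by
  rw [proj_proj, Set.inter_eq_self_of_subset_left h]

lemma proj_eq_self {A : Set Ev} {w : List Ev} (h : ∀ a ∈ w, a ∈ A) : proj A w = w := by
  simp only [proj]
  rw [List.filter_eq_self]
  intro a ha
  simpa using h a ha

lemma proj_congr_of_mem {A B : Set Ev} {w : List Ev} (h : ∀ a ∈ w, (a ∈ A ↔ a ∈ B)) :
    proj A w = proj B w := by
  apply List.filter_congr
  intro x hx
  simp [h x hx]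

lemma mem_of_mem_proj {A : Set Ev} {w : List Ev} {a : Ev} (h : a ∈ proj A w) :
    a ∈ w ∧ a ∈ A := by
  simp only [proj, List.mem_filter, decide_eq_true_eq] at h
  exact h

lemma merge (A B : Set Ev) : ∀ u1 u2 : List Ev, (∀ a ∈ u1, a ∈ A) → (∀ a ∈ u2, a ∈ B) →
    proj (A ∩ B) u1 = proj (A ∩ B) u2 →
    ∃ v, (∀ a ∈ v, a ∈ A ∪ B) ∧ proj A v = u1 ∧ proj B v = u2 := by
  intro u1
  induction u1 with
  | nil =>
    intro u2 _ h2 hp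
    refine ⟨u2, fun a ha => Or.inr (h2 a ha), ?_, proj_eq_self h2⟩
    rw [proj_congr_of_mem (fun a ha => ?_), ← hp]
    · rfl
    · exact ⟨fun hA => ⟨hA, h2 a ha⟩, fun hAB => hAB.1⟩
  | cons a u1' ih =>
    intro u2 h1 h2 hp
    have haA : a ∈ A := h1 a List.mem_cons_self
    by_cases hB : a ∈ B
    · have hcons : proj (A ∩ B) (a :: u1') = a :: proj (A ∩ B) u1' := by
        simp [proj, List.filter_cons, haA, hB]
      rw [hcons] at hp
      simp only [proj] at hp
      obtain ⟨l1, l2, hu2, hl1, -, hl2⟩ := List.filter_eq_cons_iff.mp hp.symm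
      have hl2B : ∀ x ∈ l2, x ∈ B := fun x hx => h2 x (by rw [hu2]; simp [hx])
      have hl1B : ∀ x ∈ l1, x ∈ B := fun x hx => h2 x (by rw [hu2]; simp [hx])
      obtain ⟨v, hv, hvA, hvB⟩ :=
        ih l2 (fun x hx => h1 x (List.mem_cons_of_mem _ hx)) hl2B (by
          simpa only [proj] using hl2.symm)
      refine ⟨l1 ++ a :: v, ?_, ?_, ?_⟩
      · intro x hx
        rcases List.mem_append.mp hx with h | h
        · exact Or.inr (hl1B x h)
        · rcases List.mem_cons.mp h with h | h
          · exact h ▸ Or.inl haA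
          · exact hv x h
      · have hl1A : proj A l1 = [] := by
          simp only [proj, List.filter_eq_nil_iff]
          intro x hx
          simp only [decide_eq_true_eq]
          intro hxA
          exact hl1 x hx (by simp [hxA, hl1B x hx])
        rw [proj_append, hl1A]
        simp only [proj, List.filter_cons] at hvA ⊢
        simp [haA, hvA]
      · rw [hu2, proj_append, proj_eq_self hl1B]
        simp only [proj, List.filter_cons] at hvB ⊢
        simp [hB, hvB]
    · have hcons : proj (A ∩ B) (a :: u1') = proj (A ∩ B) u1' := by
        simp [proj, List.filter_cons, hB]
      rw [hcons] at hp
      obtain ⟨v, hv, hvA, hvB⟩ := ih u2 (fun x hx => h1 x (List.mem_cons_of_mem _ hx)) h2 hp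
      refine ⟨a :: v, ?_, ?_, ?_⟩
      · intro x hx
        rcases List.mem_cons.mp hx with h | h
        · exact h ▸ Or.inl haA
        · exact hv x h
      · simp only [proj, List.filter_cons] at hvA ⊢
        simp [haA, hvA]
      · simp only [proj, List.filter_cons] at hvB ⊢
        simp [hB, hvB]

end H


/-- nonblocking coordinator theorem. With L0 = P0(L1) || P0(L2) and P0 an
observer for L1 and L2, the composed system with coordinator L0 is nonblocking. -/
theorem stmt12 {Ev : Type*} (E1 E2 E0 : Set Ev)
    (hsh : E1 ∩ E2 ⊆ E0) (hE0 : E0 ⊆ E1 ∪ E2)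
    (L1 L2 : Set (List Ev)) (hL1 : L1 ⊆ star E1) (hL2 : L2 ⊆ star E2)
    (hobs1 : observer E0 L1) (hobs2 : observer E0 L2)
    (L0 : Set (List Ev))
    (hL0 : L0 = sync (E1 ∩ E0) (E2 ∩ E0) (projL E0 L1) (projL E0 L2)) :
    prefixCl (sync E1 (E2 ∪ E0) L1 (sync E2 E0 L2 L0)) =
      sync E1 (E2 ∪ E0) (prefixCl L1) (sync E2 E0 (prefixCl L2) (prefixCl L0)) := by
  ext w
  constructor
  · rintro ⟨v, hstar, h1, -, h2, h0⟩
    rw [proj_proj_of_subset Set.subset_union_left] at h2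
    rw [proj_proj_of_subset Set.subset_union_right] at h0
    refine ⟨fun a ha => hstar a (List.mem_append_left v ha),
      ⟨proj E1 v, by rw [← proj_append]; exact h1⟩,
      fun a ha => (mem_of_mem_proj ha).2, ?_, ?_⟩
    · rw [proj_proj_of_subset Set.subset_union_left]
      exact ⟨proj E2 v, by rw [← proj_append]; exact h2⟩
    · rw [proj_proj_of_subset Set.subset_union_right]
      exact ⟨proj E0 v, by rw [← proj_append]; exact h0⟩
  · rintro ⟨hstarw, ⟨v1, hv1⟩, -, hq2, hq0⟩
    rw [proj_proj_of_subset Set.subset_union_left] at hq2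
    rw [proj_proj_of_subset Set.subset_union_right] at hq0
    obtain ⟨v2, hv2⟩ := hq2
    obtain ⟨t0, ht0⟩ := hq0
    have ht0' := ht0
    rw [hL0] at ht0'
    obtain ⟨ht0star, ht01, ht02⟩ := ht0'
    have ht0E0 : ∀ a ∈ t0, a ∈ E0 := by
      intro a ha
      rcases ht0star a (List.mem_append_right _ ha) with h | h
      · exact h.2
      · exact h.2
    have e1 : proj E0 (proj E1 w) = proj (E1 ∩ E0) w := by rw [proj_proj, Set.inter_comm]
    have e2 : proj E0 (proj E2 w) = proj (E2 ∩ E0) w := by rw [proj_proj, Set.inter_comm]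
    have hsplit1 : proj (E1 ∩ E0) (proj E0 w ++ t0) = proj E0 (proj E1 w) ++ proj (E1 ∩ E0) t0 := by
      rw [proj_append, proj_proj_of_subset Set.inter_subset_right, e1]
    have hsplit2 : proj (E2 ∩ E0) (proj E0 w ++ t0) = proj E0 (proj E2 w) ++ proj (E2 ∩ E0) t0 := by
      rw [proj_append, proj_proj_of_subset Set.inter_subset_right, e2]
    obtain ⟨u1, hu1L, hu1p⟩ := hobs1 _ ht01 (proj E1 w) ⟨v1, hv1⟩
      (by rw [hsplit1]; exact List.prefix_append _ _)
    obtain ⟨u2, hu2L, hu2p⟩ := hobs2 _ ht02 (proj E2 w) ⟨v2, hv2⟩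
      (by rw [hsplit2]; exact List.prefix_append _ _)
    have hu1e : proj E0 u1 = proj (E1 ∩ E0) t0 := by
      rw [proj_append, hsplit1] at hu1p
      exact List.append_cancel_left hu1p
    have hu2e : proj E0 u2 = proj (E2 ∩ E0) t0 := by
      rw [proj_append, hsplit2] at hu2p
      exact List.append_cancel_left hu2p
    have hu1E1 : ∀ a ∈ u1, a ∈ E1 := fun a ha => hL1 hu1L a (List.mem_append_right _ ha)
    have hu2E2 : ∀ a ∈ u2, a ∈ E2 := fun a ha => hL2 hu2L a (List.mem_append_right _ ha)
    have hc1 : proj (E1 ∩ E0) u1 = proj (E1 ∩ E0) t0 := by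
      rw [← hu1e]
      exact proj_congr_of_mem fun a ha => ⟨fun h => h.2, fun h => ⟨hu1E1 a ha, h⟩⟩
    obtain ⟨m, hmstar, hmA, hmB⟩ := merge E1 E0 u1 t0 hu1E1 ht0E0 hc1
    have hc2 : proj ((E1 ∪ E0) ∩ E2) m = proj ((E1 ∪ E0) ∩ E2) u2 := by
      have l1 : proj ((E1 ∪ E0) ∩ E2) m = proj (E2 ∩ E0) m := by
        refine proj_congr_of_mem fun a ha => ⟨?_, ?_⟩
        · rintro ⟨h1 | h1, h2⟩
          · exact ⟨h2, hsh ⟨h1, h2⟩⟩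
          · exact ⟨h2, h1⟩
        · rintro ⟨h2, h0⟩
          exact ⟨Or.inr h0, h2⟩
      have l2 : proj (E2 ∩ E0) m = proj (E2 ∩ E0) t0 := by
        rw [← hmB, proj_proj_of_subset Set.inter_subset_right]
      have r : proj ((E1 ∪ E0) ∩ E2) u2 = proj E0 u2 := by
        refine proj_congr_of_mem fun a ha => ⟨?_, ?_⟩
        · rintro ⟨h1 | h1, h2⟩
          · exact hsh ⟨h1, h2⟩
          · exact h1
        · intro h0
          exact ⟨Or.inr h0, hu2E2 a ha⟩
      rw [l1, l2, r, hu2e]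
    obtain ⟨v, hvstar, hvAB, hvC⟩ := merge (E1 ∪ E0) E2 m u2 hmstar hu2E2 hc2
    have hvE1 : proj E1 v = u1 := by
      rw [← proj_proj_of_subset Set.subset_union_left v, hvAB, hmA]
    have hvE0 : proj E0 v = t0 := by
      rw [← proj_proj_of_subset Set.subset_union_right v, hvAB, hmB]
    refine ⟨v, ?_, ?_, fun a ha => (mem_of_mem_proj ha).2, ?_, ?_⟩
    · intro a ha
      rcases List.mem_append.mp ha with h | h
      · exact hstarw a h
      · rcases hvstar a h with h' | h'
        · rcases h' with h'' | h''
          · exact Or.inl h''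
          · exact Or.inr (Or.inr h'')
        · exact Or.inr (Or.inl h')
    · rw [proj_append, hvE1]
      exact hu1L
    · rw [proj_proj_of_subset Set.subset_union_left, proj_append, hvC]
      exact hu2L
    · rw [proj_proj_of_subset Set.subset_union_right, proj_append, hvE0]
      exact ht0
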